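/- Let X be a saturated Banach function space on ℝ^n and assume the Hardy–Littlewood maximal operator M is bounded on X, i.e. there is a constant C such that Mf ∈ X and ‖Mf‖_X ≤ C‖f‖_X for all f ∈ X. Then X is a ball Banach function space: in addition to (L) and (F), X satisfies (BSi) (χ_B ∈ X for every ball B) and (BLI) (for every ball B there is a constant C_B with ∫_B |f| ≤ C_B‖f‖_X for all f ∈ X). -/

import Mathlib

open MeasureTheory Filter ENNReal

noncomputable section

/-- ℝⁿ as a Euclidean space. -/
abbrev Rn (n : ℕ) := EuclideanSpace ℝ (Fin n)

/-- A Banach space `X` contained in `L⁰(ℝⁿ)`: a collection of (a.e. equivalence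
classes of) measurable functions on `ℝⁿ`, with a complete norm. -/
structure BanachInL0 (n : ℕ) where
  carrier : Set (Rn n → ℝ)
  norm : (Rn n → ℝ) → ℝ
  mem_congr : ∀ {f g : Rn n → ℝ}, f =ᵐ[volume] g → f ∈ carrier → g ∈ carrier
  norm_congr : ∀ {f g : Rn n → ℝ}, f =ᵐ[volume] g → norm f = norm g
  aemeasurable : ∀ {f : Rn n → ℝ}, f ∈ carrier → AEMeasurable f volume
  zero_mem : (0 : Rn n → ℝ) ∈ carrier
  add_mem : ∀ {f g : Rn n → ℝ}, f ∈ carrier → g ∈ carrier → f + g ∈ carrier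
  smul_mem : ∀ (c : ℝ) {f : Rn n → ℝ}, f ∈ carrier → c • f ∈ carrier
  norm_nonneg : ∀ f : Rn n → ℝ, 0 ≤ norm f
  norm_eq_zero : ∀ {f : Rn n → ℝ}, f ∈ carrier → norm f = 0 → f =ᵐ[volume] (0 : Rn n → ℝ)
  norm_zero : norm 0 = 0
  norm_add_le : ∀ {f g : Rn n → ℝ}, f ∈ carrier → g ∈ carrier → norm (f + g) ≤ norm f + norm g
  norm_smul : ∀ (c : ℝ) (f : Rn n → ℝ), norm (c • f) = |c| * norm f
  complete : ∀ F : ℕ → Rn n → ℝ, (∀ k, F k ∈ carrier) →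
    (∀ ε : ℝ, 0 < ε → ∃ N : ℕ, ∀ k l, N ≤ k → N ≤ l → norm (F k - F l) < ε) →
    ∃ g ∈ carrier, Tendsto (fun k => norm (F k - g)) atTop (nhds 0)

namespace BanachInL0

variable {n : ℕ}

/-- The lattice property (L). -/
def PropL (X : BanachInL0 n) : Prop :=
  ∀ f g : Rn n → ℝ, f ∈ X.carrier → AEMeasurable g volume →
    (∀ᵐ x ∂volume, |g x| ≤ |f x|) → g ∈ X.carrier ∧ X.norm g ≤ X.norm f

/-- The Fatou property (F). -/
def PropF (X : BanachInL0 n) : Prop :=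
  ∀ (F : ℕ → Rn n → ℝ) (f : Rn n → ℝ), (∀ k, F k ∈ X.carrier) → AEMeasurable f volume →
    (∀ᵐ x ∂volume, (∀ k, 0 ≤ F k x) ∧ Monotone (fun k => F k x) ∧
      Tendsto (fun k => F k x) atTop (nhds (f x))) →
    BddAbove (Set.range fun k => X.norm (F k)) →
    f ∈ X.carrier ∧ X.norm f = ⨆ k, X.norm (F k)

/-- The saturation property (Sa). -/
def PropSa (X : BanachInL0 n) : Prop :=
  ∀ E : Set (Rn n), MeasurableSet E → 0 < volume E →
    ∃ F : Set (Rn n), MeasurableSet F ∧ F ⊆ E ∧ 0 < volume F ∧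
      F.indicator (fun _ => (1 : ℝ)) ∈ X.carrier

/-- Property (BSi): the indicator of every ball belongs to `X`. -/
def PropBSi (X : BanachInL0 n) : Prop :=
  ∀ (c : Rn n) (r : ℝ), 0 < r →
    (Metric.ball c r).indicator (fun _ => (1 : ℝ)) ∈ X.carrier

/-- Property (BLI): functions in `X` are locally integrable, uniformly on each ball. -/
def PropBLI (X : BanachInL0 n) : Prop :=
  ∀ (c : Rn n) (r : ℝ), 0 < r → ∃ C : ℝ, ∀ f ∈ X.carrier,
    ∫⁻ y in Metric.ball c r, ENNReal.ofReal |f y| ≤ ENNReal.ofReal (C * X.norm f)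

/-- Property (Si): the indicator of every set of finite measure belongs to `X`. -/
def PropSi (X : BanachInL0 n) : Prop :=
  ∀ E : Set (Rn n), MeasurableSet E → volume E < ∞ →
    E.indicator (fun _ => (1 : ℝ)) ∈ X.carrier

/-- Property (LI): functions in `X` are integrable on sets of finite measure,
uniformly on each such set. -/
def PropLI (X : BanachInL0 n) : Prop :=
  ∀ E : Set (Rn n), MeasurableSet E → volume E < ∞ → ∃ C : ℝ, ∀ f ∈ X.carrier,
    ∫⁻ y in E, ENNReal.ofReal |f y| ≤ ENNReal.ofReal (C * X.norm f)

/-- A saturated Banach function space: (L), (F) and (Sa). -/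
def IsSaturatedBFS (X : BanachInL0 n) : Prop :=
  X.PropL ∧ X.PropF ∧ X.PropSa

/-- A ball Banach function space: (L), (F), (BSi) and (BLI). -/
def IsBallBFS (X : BanachInL0 n) : Prop :=
  X.PropL ∧ X.PropF ∧ X.PropBSi ∧ X.PropBLI

end BanachInL0

/-- The Köthe dual of a set `S ⊆ L⁰(ℝⁿ)` of measurable functions. -/
def kotheDual {n : ℕ} (S : Set (Rn n → ℝ)) : Set (Rn n → ℝ) :=
  {g | AEMeasurable g volume ∧ ∀ f ∈ S, Integrable (fun x => f x * g x) volume}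

/-- The Köthe dual (semi)norm associated with a set `S` normed by `N : S → ℝ`. -/
def kotheDualNorm {n : ℕ} (S : Set (Rn n → ℝ)) (N : (Rn n → ℝ) → ℝ)
    (g : Rn n → ℝ) : ℝ≥0∞ :=
  ⨆ (f : Rn n → ℝ) (_ : f ∈ S ∧ N f ≤ 1), ∫⁻ x, ENNReal.ofReal |f x * g x|

/-- The Köthe dual (semi)norm associated with a set `S` normed by `N : S → ℝ≥0∞`. -/
def kotheDualNormE {n : ℕ} (S : Set (Rn n → ℝ)) (N : (Rn n → ℝ) → ℝ≥0∞)
    (g : Rn n → ℝ) : ℝ≥0∞ :=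
  ⨆ (f : Rn n → ℝ) (_ : f ∈ S ∧ N f ≤ 1), ∫⁻ x, ENNReal.ofReal |f x * g x|

/-- The Hardy–Littlewood maximal operator on `ℝⁿ`. -/
def hlMaximal {n : ℕ} (f : Rn n → ℝ) (x : Rn n) : ℝ≥0∞ :=
  ⨆ (c : Rn n) (r : ℝ) (_ : x ∈ Metric.ball c r),
    (volume (Metric.ball c r))⁻¹ * ∫⁻ y in Metric.ball c r, ENNReal.ofReal |f y|


lemma le_hlMaximal {n : ℕ} (f : Rn n → ℝ) (c : Rn n) (r : ℝ) (x : Rn n)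
    (hx : x ∈ Metric.ball c r) :
    (volume (Metric.ball c r))⁻¹ * ∫⁻ y in Metric.ball c r, ENNReal.ofReal |f y|
      ≤ hlMaximal f x :=
  le_iSup_of_le c (le_iSup_of_le r (le_iSup_of_le hx le_rfl))

/-- If `X` is a saturated Banach function space on which the Hardy–Littlewood
maximal operator is bounded, then `X` is a ball Banach function space. -/
theorem isBallBFS_of_maximal_bounded {n : ℕ} (X : BanachInL0 n)
    (hX : X.IsSaturatedBFS)
    (hM : ∃ C : ℝ, ∀ f ∈ X.carrier, (∀ᵐ x ∂volume, hlMaximal f x < ∞) ∧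
      (fun x => (hlMaximal f x).toReal) ∈ X.carrier ∧
      X.norm (fun x => (hlMaximal f x).toReal) ≤ C * X.norm f) :
    X.IsBallBFS := by
  obtain ⟨C, hM⟩ := hM
  obtain ⟨hL, hF, hSa⟩ := hX
  -- get a positive-measure set whose indicator is in X
  have hunivpos : 0 < volume (Set.univ : Set (Rn n)) :=
    lt_of_lt_of_le (Metric.measure_ball_pos volume (0 : Rn n) one_pos)
      (measure_mono (Set.subset_univ _))
  obtain ⟨F, hFmeas, -, hFpos, hFmem⟩ := hSa Set.univ MeasurableSet.univ hunivpos
  -- find a bounded piece of F of positive measure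
  have hK : ∃ K : ℕ, 0 < volume (F ∩ Metric.ball (0 : Rn n) (K + 1)) := by
    by_contra h
    push_neg at h
    have hsub : F ⊆ ⋃ K : ℕ, F ∩ Metric.ball (0 : Rn n) (K + 1) := by
      intro x hx
      obtain ⟨K, hKx⟩ := exists_nat_gt (dist x (0 : Rn n))
      exact Set.mem_iUnion.2 ⟨K, hx, by simpa [Metric.mem_ball] using hKx.trans (by linarith)⟩
    have : volume F = 0 := measure_mono_null hsub (by
      refine measure_iUnion_null fun K => le_antisymm (h K) zero_le)
    exact absurd this hFpos.ne'
  obtain ⟨K, hKpos⟩ := hK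
  set F₀ : Set (Rn n) := F ∩ Metric.ball (0 : Rn n) (K + 1) with hF₀def
  have hF₀fin : volume F₀ < ∞ :=
    lt_of_le_of_lt (measure_mono Set.inter_subset_right) measure_ball_lt_top
  set χF : Rn n → ℝ := F.indicator (fun _ => (1 : ℝ)) with hχFdef
  -- (BSi)
  have hBSi : X.PropBSi := by
    intro c r hr
    set R : ℝ := ((K : ℝ) + 1) + ‖c‖ + r with hRdef
    have hKR : ((K : ℝ) + 1) ≤ R := by
      have : (0:ℝ) ≤ ‖c‖ := norm_nonneg c
      simp only [hRdef]; linarith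
    have hball0 : Metric.ball (0 : Rn n) ((K:ℝ) + 1) ⊆ Metric.ball (0 : Rn n) R :=
      Metric.ball_subset_ball hKR
    set δ : ℝ≥0∞ := (volume (Metric.ball (0 : Rn n) R))⁻¹ * volume F₀ with hδdef
    have hRpos : 0 < R := by
      have : (0:ℝ) ≤ ‖c‖ := norm_nonneg c
      have : (0:ℝ) ≤ (K:ℝ) := Nat.cast_nonneg K
      simp only [hRdef]; linarith [norm_nonneg c, (Nat.cast_nonneg K : (0:ℝ) ≤ K)]
    have hvRpos : 0 < volume (Metric.ball (0 : Rn n) R) :=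
      Metric.measure_ball_pos volume _ hRpos
    have hvRfin : volume (Metric.ball (0 : Rn n) R) < ∞ := measure_ball_lt_top
    have hδpos : 0 < δ := by
      apply ENNReal.mul_pos
      · exact (ENNReal.inv_ne_zero.2 hvRfin.ne)
      · exact hKpos.ne'
    have hδfin : δ < ∞ :=
      ENNReal.mul_lt_top (ENNReal.inv_lt_top.2 hvRpos) hF₀fin
    -- lower bound for the maximal function of χF on the ball
    have hkey : ∀ x ∈ Metric.ball c r, δ ≤ hlMaximal χF x := by
      intro x hx
      have hxR : x ∈ Metric.ball (0 : Rn n) R := by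
        rw [Metric.mem_ball] at hx ⊢
        calc dist x 0 ≤ dist x c + dist c 0 := dist_triangle _ _ _
          _ < r + ‖c‖ := by
              have : dist c (0 : Rn n) = ‖c‖ := by simp
              linarith [hx, this.le, this.ge, (show dist c (0:Rn n) = ‖c‖ by simp)]
          _ ≤ R := by simp only [hRdef]; linarith [(Nat.cast_nonneg K : (0:ℝ) ≤ K)]
      refine le_trans ?_ (le_hlMaximal χF 0 R x hxR)
      refine mul_le_mul_right ?_ _
      have hsub : F₀ ⊆ Metric.ball (0 : Rn n) R :=
        Set.inter_subset_right.trans hball0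
      calc volume F₀ = ∫⁻ _ in F₀, (1 : ℝ≥0∞) := (setLIntegral_one F₀).symm
        _ = ∫⁻ y in F₀, ENNReal.ofReal |χF y| := by
            refine setLIntegral_congr_fun (hFmeas.inter measurableSet_ball)
              (fun y hy => ?_)
            have : χF y = 1 := Set.indicator_of_mem hy.1 _
            simp [this]
        _ ≤ ∫⁻ y in Metric.ball (0 : Rn n) R, ENNReal.ofReal |χF y| :=
            lintegral_mono_set hsub
    obtain ⟨hfin, hmem, -⟩ := hM χF hFmem
    have hδtpos : 0 < δ.toReal := ENNReal.toReal_pos hδpos.ne' hδfin.ne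
    have := hL (δ.toReal⁻¹ • fun x => (hlMaximal χF x).toReal)
      ((Metric.ball c r).indicator (fun _ => (1 : ℝ)))
      (X.smul_mem _ hmem)
      ((measurable_const.indicator measurableSet_ball).aemeasurable)
      ?_
    · exact this.1
    · filter_upwards [hfin] with x hx
      by_cases hxB : x ∈ Metric.ball c r
      · have h1 : δ.toReal ≤ (hlMaximal χF x).toReal :=
          ENNReal.toReal_mono hx.ne (hkey x hxB)
        have h2 : (1 : ℝ) ≤ δ.toReal⁻¹ * (hlMaximal χF x).toReal := by
          rw [← inv_mul_cancel₀ hδtpos.ne']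
          exact mul_le_mul_of_nonneg_left h1 (by positivity)
        have : ((Metric.ball c r).indicator (fun _ => (1:ℝ)) x) = 1 :=
          Set.indicator_of_mem hxB _
        rw [this]
        simp only [Pi.smul_apply, smul_eq_mul]
        rw [abs_one, abs_of_nonneg (le_trans zero_le_one h2)]
        exact h2
      · have : ((Metric.ball c r).indicator (fun _ => (1:ℝ)) x) = 0 :=
          Set.indicator_of_notMem hxB _
        rw [this, abs_zero]
        exact abs_nonneg _
  -- (BLI)
  have hBLI : X.PropBLI := by
    intro c r hr
    set χB : Rn n → ℝ := (Metric.ball c r).indicator (fun _ => (1 : ℝ)) with hχBdef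
    have hBmem : χB ∈ X.carrier := hBSi c r hr
    have hvBpos : 0 < volume (Metric.ball c r) := Metric.measure_ball_pos volume _ hr
    set N : ℝ := X.norm χB with hNdef
    have hNpos : 0 < N := by
      rcases (X.norm_nonneg χB).lt_or_eq with h | h
      · exact h
      · exfalso
        have hae : χB =ᵐ[volume] (0 : Rn n → ℝ) := X.norm_eq_zero hBmem h.symm
        have hnull : volume {x | χB x ≠ (0 : ℝ)} = 0 := by
          simpa [Filter.EventuallyEq, ae_iff] using hae
        have hsub : Metric.ball c r ⊆ {x | χB x ≠ (0 : ℝ)} := by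
          intro x hx
          simp only [Set.mem_setOf_eq, hχBdef, Set.indicator_of_mem hx]
          exact one_ne_zero
        exact absurd (measure_mono_null hsub hnull) hvBpos.ne'
    have hvB2pos : 0 < volume (Metric.ball c (2 * r)) :=
      Metric.measure_ball_pos volume _ (by linarith)
    have hvB2fin : volume (Metric.ball c (2 * r)) < ∞ := measure_ball_lt_top
    set v2 : ℝ := (volume (Metric.ball c (2 * r))).toReal with hv2def
    have hv2pos : 0 < v2 := ENNReal.toReal_pos hvB2pos.ne' hvB2fin.ne
    refine ⟨v2 * C / N, fun f hf => ?_⟩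
    obtain ⟨hfin, hmem, hnorm⟩ := hM f hf
    set A : ℝ≥0∞ := ∫⁻ y in Metric.ball c r, ENNReal.ofReal |f y| with hAdef
    have hB2 : Metric.ball c r ⊆ Metric.ball c (2 * r) :=
      Metric.ball_subset_ball (by linarith)
    have hlow : ∀ x ∈ Metric.ball c r,
        (volume (Metric.ball c (2 * r)))⁻¹ * A ≤ hlMaximal f x := by
      intro x hx
      exact le_trans (mul_le_mul_right (lintegral_mono_set hB2) _)
        (le_hlMaximal f c (2 * r) x (hB2 hx))
    have hAfin : A ≠ ∞ := by
      have hx : ∃ x, x ∈ Metric.ball c r ∧ hlMaximal f x < ∞ := by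
        by_contra h
        push_neg at h
        have hsub : Metric.ball c r ⊆ {x | ¬ hlMaximal f x < ∞} := fun x hx =>
          not_lt.2 (h x hx)
        have hnull : volume {x | ¬ hlMaximal f x < ∞} = 0 := by
          simpa [ae_iff] using hfin
        exact absurd (measure_mono_null hsub hnull) hvBpos.ne'
      obtain ⟨x, hx, hxfin⟩ := hx
      intro hA
      have h1 := hlow x hx
      rw [hA, ENNReal.mul_top (ENNReal.inv_ne_zero.2 hvB2fin.ne)] at h1
      exact absurd (top_le_iff.1 h1) hxfin.ne
    set a : ℝ := A.toReal with hadef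
    have hanonneg : 0 ≤ a := ENNReal.toReal_nonneg
    -- apply the lattice property to (a/v2) • χB ≤ Mf
    have hae : ∀ᵐ x ∂volume,
        |((a / v2) • χB) x| ≤ |(fun x => (hlMaximal f x).toReal) x| := by
      filter_upwards [hfin] with x hx
      by_cases hxB : x ∈ Metric.ball c r
      · have h1 : ((volume (Metric.ball c (2 * r)))⁻¹ * A).toReal
            ≤ (hlMaximal f x).toReal :=
          ENNReal.toReal_mono hx.ne (hlow x hxB)
        have h2 : ((volume (Metric.ball c (2 * r)))⁻¹ * A).toReal = a / v2 := by
          rw [ENNReal.toReal_mul, ENNReal.toReal_inv]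
          rw [← hv2def, ← hadef]
          ring
        simp only [Pi.smul_apply, smul_eq_mul, hχBdef, Set.indicator_of_mem hxB,
          mul_one]
        rw [abs_of_nonneg (by positivity)]
        exact le_trans (h2 ▸ h1) (le_abs_self _)
      · simp only [Pi.smul_apply, smul_eq_mul, hχBdef, Set.indicator_of_notMem hxB,
          mul_zero, abs_zero]
        exact abs_nonneg _
    obtain ⟨-, hle⟩ := hL (fun x => (hlMaximal f x).toReal) ((a / v2) • χB) hmem
      (((measurable_const.indicator measurableSet_ball).aemeasurable).const_smul (a / v2))
      hae
    have hnormg : X.norm ((a / v2) • χB) = (a / v2) * N := by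
      rw [X.norm_smul, abs_of_nonneg (by positivity), hNdef]
    have h2 : (a / v2) * N ≤ C * X.norm f := by
      rw [← hnormg]; exact hle.trans hnorm
    have h3 : a ≤ v2 * C / N * X.norm f := by
      have heq : a = ((a / v2) * N) * (v2 / N) := by field_simp
      calc a = ((a / v2) * N) * (v2 / N) := heq
        _ ≤ (C * X.norm f) * (v2 / N) :=
            mul_le_mul_of_nonneg_right h2 (by positivity)
        _ = v2 * C / N * X.norm f := by ring
    calc A = ENNReal.ofReal a := (ENNReal.ofReal_toReal hAfin).symm
      _ ≤ ENNReal.ofReal (v2 * C / N * X.norm f) := ENNReal.ofReal_le_ofReal h3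
  exact ⟨hL, hF, hBSi, hBLI⟩

end
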